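/- The group Homeo(I, ∂I) is not bi-orderable. -/

import Mathlib

open Set

namespace Stmt

lemma negOne_mem_I : (-1 : ℝ) ∈ Set.Icc (-1 : ℝ) 1 := by norm_num
lemma one_mem_I : (1 : ℝ) ∈ Set.Icc (-1 : ℝ) 1 := by norm_num

/-- The group of homeomorphisms of `I = [-1,1]` fixing the endpoints `-1` and `1`,
realized as a subgroup of the group of bijections of `I`. -/
def HomeoI : Subgroup (Equiv.Perm (Set.Icc (-1 : ℝ) 1)) where
  carrier := {f | Continuous f ∧ Continuous f.symm ∧
    f ⟨-1, negOne_mem_I⟩ = ⟨-1, negOne_mem_I⟩ ∧ f ⟨1, one_mem_I⟩ = ⟨1, one_mem_I⟩}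
  one_mem' := ⟨continuous_id, continuous_id, rfl, rfl⟩
  mul_mem' := by
    rintro a b ⟨ha1, ha2, ha3, ha4⟩ ⟨hb1, hb2, hb3, hb4⟩
    refine ⟨ha1.comp hb1, ?_, ?_, ?_⟩
    · first | exact hb2.comp ha2 | simpa [mul_inv_rev] using hb2.comp ha2
    · simp [Equiv.Perm.mul_apply, hb3, ha3]
    · simp [Equiv.Perm.mul_apply, hb4, ha4]
  inv_mem' := by
    rintro a ⟨ha1, ha2, ha3, ha4⟩
    refine ⟨ha2, by first | exact ha1 | simpa using ha1, ?_, ?_⟩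
    · show a.symm _ = _
      rw [Equiv.symm_apply_eq, ha3]
    · show a.symm _ = _
      rw [Equiv.symm_apply_eq, ha4]

end Stmt

namespace Sol

/-- In a bi-orderable group, squares are injective. -/
lemma sq_inj {G : Type*} [Group G]
    (hBO : ∃ r : G → G → Prop, IsStrictTotalOrder G r ∧
      ∀ f g h : G, r g h → r (f * g) (f * h) ∧ r (g * f) (h * f))
    {a b : G} (h : a * a = b * b) : a = b := by
  obtain ⟨r, hsto, hc⟩ := hBO
  haveI := hsto
  rcases trichotomous_of r a b with hab | heq | hba
  · exfalso
    have h1 := (hc a a b hab).1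
    have h2 := (hc b a b hab).2
    have := trans_of r h1 h2
    rw [h] at this
    exact irrefl_of r _ this
  · exact heq
  · exfalso
    have h1 := (hc b b a hba).1
    have h2 := (hc a b a hba).2
    have := trans_of r h1 h2
    rw [h] at this
    exact irrefl_of r _ this

noncomputable def hFun (x : ℝ) : ℝ := x + Real.sin (Real.pi * x) / 4

lemma sin_lip (a b : ℝ) : |Real.sin a - Real.sin b| ≤ |a - b| := by
  rw [Real.sin_sub_sin, abs_mul, abs_mul]
  have h1 : |Real.sin ((a - b) / 2)| ≤ |(a - b) / 2| := Real.abs_sin_le_abs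
  have h2 : |Real.cos ((a + b) / 2)| ≤ 1 := Real.abs_cos_le_one _
  have h3 : |(a - b) / 2| = |a - b| / 2 := by rw [abs_div]; norm_num
  have h4 : |(2:ℝ)| = 2 := by norm_num
  rw [h4]
  rw [h3] at h1
  nlinarith [abs_nonneg (Real.sin ((a - b) / 2)), abs_nonneg (a - b),
    abs_nonneg (Real.cos ((a + b) / 2))]

lemma hFun_strictMono : StrictMono hFun := by
  intro x y hxy
  have L := sin_lip (Real.pi * y) (Real.pi * x)
  have hpi : Real.pi < 3.15 := Real.pi_lt_d2
  have hpi0 : 0 < Real.pi := Real.pi_pos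
  have habs : |Real.pi * y - Real.pi * x| = Real.pi * (y - x) := by
    rw [abs_of_nonneg] <;> nlinarith
  rw [habs] at L
  have L' := abs_le.mp L
  unfold hFun
  nlinarith [L'.1, L'.2]

lemma hFun_continuous : Continuous hFun := by
  unfold hFun; fun_prop

lemma hFun_surjective : Function.Surjective hFun := by
  intro y
  have h1 : hFun (y - 1) ≤ y := by
    have := Real.sin_le_one (Real.pi * (y - 1)); unfold hFun; linarith
  have h2 : y ≤ hFun (y + 1) := by
    have := Real.neg_one_le_sin (Real.pi * (y + 1)); unfold hFun; linarith
  have := intermediate_value_Icc (by linarith : y - 1 ≤ y + 1) hFun_continuous.continuousOn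
  obtain ⟨x, _, hx⟩ := this ⟨h1, h2⟩
  exact ⟨x, hx⟩

noncomputable def hIso : ℝ ≃o ℝ :=
  StrictMono.orderIsoOfSurjective hFun hFun_strictMono hFun_surjective

lemma hIso_apply (x : ℝ) : hIso x = hFun x := rfl

lemma hFun_add_two (x : ℝ) : hFun (x + 2) = hFun x + 2 := by
  unfold hFun
  have : Real.pi * (x + 2) = Real.pi * x + 2 * Real.pi := by ring
  rw [this, Real.sin_add_two_pi]; ring

noncomputable def fIso : ℝ ≃o ℝ :=
  (hIso.symm.trans (OrderIso.addRight 1)).trans hIso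

noncomputable def gIso : ℝ ≃o ℝ := OrderIso.addRight (1 : ℝ)

lemma fIso_apply (x : ℝ) : fIso x = hFun (hIso.symm x + 1) := rfl

lemma gIso_apply (x : ℝ) : gIso x = x + 1 := rfl

lemma fIso_fIso (x : ℝ) : fIso (fIso x) = x + 2 := by
  have h1 : hIso.symm (fIso x) = hIso.symm x + 1 := by
    have : fIso x = hIso (hIso.symm x + 1) := rfl
    rw [this, OrderIso.symm_apply_apply]
  rw [fIso_apply, h1]
  have : hIso.symm x + 1 + 1 = hIso.symm x + 2 := by ring
  rw [this, hFun_add_two]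
  have : hFun (hIso.symm x) = hIso (hIso.symm x) := rfl
  rw [this, OrderIso.apply_symm_apply]

lemma gIso_gIso (x : ℝ) : gIso (gIso x) = x + 2 := by
  rw [gIso_apply, gIso_apply]; ring

lemma hFun_half : hFun (1/2 : ℝ) = 3/4 := by
  unfold hFun
  have : Real.pi * (1/2 : ℝ) = Real.pi / 2 := by ring
  rw [this, Real.sin_pi_div_two]; norm_num

lemma fIso_eval : fIso (3/4 : ℝ) = 5/4 := by
  have hsymm : hIso.symm (3/4 : ℝ) = 1/2 := by
    rw [OrderIso.symm_apply_eq, hIso_apply]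
    exact hFun_half.symm
  rw [fIso_apply, hsymm]
  unfold hFun
  have : Real.pi * (1/2 + 1 : ℝ) = Real.pi / 2 + Real.pi := by ring
  rw [this, Real.sin_add_pi, Real.sin_pi_div_two]
  norm_num

lemma gIso_eval : gIso (3/4 : ℝ) = 7/4 := by rw [gIso_apply]; norm_num

noncomputable def phi : ℝ ≃o Set.Ioo (-1:ℝ) 1 := orderIsoIooNegOneOne ℝ

def inc (q : Set.Ioo (-1:ℝ) 1) : Set.Icc (-1:ℝ) 1 := ⟨q, Set.Ioo_subset_Icc_self q.2⟩

lemma inc_injective : Function.Injective inc := by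
  intro a b h
  have h2 : ((inc a : Set.Icc (-1:ℝ) 1) : ℝ) = ((inc b : Set.Icc (-1:ℝ) 1) : ℝ) :=
    congrArg Subtype.val h
  exact Subtype.ext h2

noncomputable def extFun (w : ℝ ≃o ℝ) (p : Set.Icc (-1:ℝ) 1) : Set.Icc (-1:ℝ) 1 :=
  if h : (p:ℝ) ∈ Set.Ioo (-1:ℝ) 1 then inc (phi (w (phi.symm ⟨p, h⟩))) else p

lemma extFun_inc (w : ℝ ≃o ℝ) (x : ℝ) : extFun w (inc (phi x)) = inc (phi (w x)) := by
  have h : ((inc (phi x) : Set.Icc (-1:ℝ) 1) : ℝ) ∈ Set.Ioo (-1:ℝ) 1 := (phi x).2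
  rw [extFun, dif_pos h]
  have h2 : (⟨(inc (phi x) : Set.Icc (-1:ℝ) 1), h⟩ : Set.Ioo (-1:ℝ) 1) = phi x :=
    Subtype.ext rfl
  rw [h2, OrderIso.symm_apply_apply]

lemma boundary {p : Set.Icc (-1:ℝ) 1} (h : (p:ℝ) ∉ Set.Ioo (-1:ℝ) 1) :
    (p:ℝ) = -1 ∨ (p:ℝ) = 1 := by
  rcases p.2 with ⟨h1, h2⟩
  rcases eq_or_lt_of_le h1 with e | l1
  · exact Or.inl e.symm
  rcases eq_or_lt_of_le h2 with e | l2
  · exact Or.inr e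
  exact absurd ⟨l1, l2⟩ h

lemma extFun_strictMono (w : ℝ ≃o ℝ) : StrictMono (extFun w) := by
  intro p q hpq
  have hpq' : (p:ℝ) < (q:ℝ) := hpq
  rw [← Subtype.coe_lt_coe]
  by_cases hp : (p:ℝ) ∈ Set.Ioo (-1:ℝ) 1
  · by_cases hq : (q:ℝ) ∈ Set.Ioo (-1:ℝ) 1
    · rw [extFun, dif_pos hp, extFun, dif_pos hq]
      have : (⟨(p:ℝ), hp⟩ : Set.Ioo (-1:ℝ) 1) < ⟨(q:ℝ), hq⟩ := hpq'
      exact Subtype.coe_lt_coe.mpr ((phi.strictMono (w.strictMono (phi.symm.strictMono this))))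
    · rcases boundary hq with e | e
      · rw [e] at hpq'
        exact absurd hpq' (not_lt.mpr hp.1.le)
      · rw [extFun, dif_pos hp, extFun, dif_neg hq]
        calc ((inc (phi (w (phi.symm ⟨p, hp⟩))) : Set.Icc (-1:ℝ) 1) : ℝ)
            < 1 := (phi _).2.2
          _ = (q:ℝ) := e.symm
  · rcases boundary hp with e | e
    · rw [extFun, dif_neg hp]
      by_cases hq : (q:ℝ) ∈ Set.Ioo (-1:ℝ) 1
      · rw [extFun, dif_pos hq]
        calc (p:ℝ) = -1 := e
          _ < _ := (phi _).2.1
      · rw [extFun, dif_neg hq]; exact hpq'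
    · rw [e] at hpq'
      exact absurd hpq' (not_lt.mpr q.2.2)

lemma extFun_surjective (w : ℝ ≃o ℝ) : Function.Surjective (extFun w) := by
  intro q
  by_cases hq : (q:ℝ) ∈ Set.Ioo (-1:ℝ) 1
  · refine ⟨inc (phi (w.symm (phi.symm ⟨q, hq⟩))), ?_⟩
    rw [extFun_inc, OrderIso.apply_symm_apply, OrderIso.apply_symm_apply]
    exact Subtype.ext rfl
  · exact ⟨q, by rw [extFun, dif_neg hq]⟩

lemma extFun_extFun (w₁ w₂ : ℝ ≃o ℝ) (p : Set.Icc (-1:ℝ) 1) :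
    extFun w₁ (extFun w₂ p) = extFun (w₂.trans w₁) p := by
  by_cases hp : (p:ℝ) ∈ Set.Ioo (-1:ℝ) 1
  · rw [show extFun w₂ p = inc (phi (w₂ (phi.symm ⟨p, hp⟩))) from dif_pos hp,
      extFun_inc, show extFun (w₂.trans w₁) p = _ from dif_pos hp]
    rfl
  · rw [show extFun w₂ p = p from dif_neg hp, show extFun w₁ p = p from dif_neg hp,
      show extFun (w₂.trans w₁) p = p from dif_neg hp]

noncomputable def E (w : ℝ ≃o ℝ) : Set.Icc (-1:ℝ) 1 ≃o Set.Icc (-1:ℝ) 1 :=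
  StrictMono.orderIsoOfSurjective (extFun w) (extFun_strictMono w) (extFun_surjective w)

lemma E_apply (w : ℝ ≃o ℝ) (p : Set.Icc (-1:ℝ) 1) : E w p = extFun w p := rfl

lemma E_mem (w : ℝ ≃o ℝ) : (E w).toEquiv ∈ Stmt.HomeoI := by
  refine ⟨(E w).continuous, (E w).symm.continuous, ?_, ?_⟩
  · show extFun w ⟨-1, Stmt.negOne_mem_I⟩ = ⟨-1, Stmt.negOne_mem_I⟩
    rw [extFun, dif_neg]
    simp
  · show extFun w ⟨1, Stmt.one_mem_I⟩ = ⟨1, Stmt.one_mem_I⟩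
    rw [extFun, dif_neg]
    simp


lemma f_trans_f : fIso.trans fIso = gIso.trans gIso := by
  ext x
  show fIso (fIso x) = gIso (gIso x)
  rw [fIso_fIso, gIso_gIso]

lemma extFun_sq (p : Set.Icc (-1:ℝ) 1) :
    extFun fIso (extFun fIso p) = extFun gIso (extFun gIso p) := by
  rw [extFun_extFun, extFun_extFun, f_trans_f]

lemma extFun_ne : extFun fIso (inc (phi (3/4))) ≠ extFun gIso (inc (phi (3/4))) := by
  rw [extFun_inc, extFun_inc, fIso_eval, gIso_eval]
  intro h
  have h2 : phi (5/4 : ℝ) = phi (7/4 : ℝ) := inc_injective h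
  have h3 : (5/4 : ℝ) = 7/4 := phi.injective h2
  norm_num at h3

end Sol

/-- A group `G` is bi-orderable if there is a strict total order `<` on `G` such that
`g < h` implies both `f*g < f*h` and `g*f < h*f` for all `f, g, h`. -/
def BiOrderable (G : Type*) [Group G] : Prop :=
  ∃ r : G → G → Prop, IsStrictTotalOrder G r ∧
    ∀ f g h : G, r g h → r (f * g) (f * h) ∧ r (g * f) (h * f)

/-- The group `Homeo(I, ∂I)` of homeomorphisms of `[-1,1]` fixing the endpoints is
not bi-orderable. -/
theorem homeoI_not_biOrderable : ¬ BiOrderable Stmt.HomeoI := by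
  intro hBO
  set F : Stmt.HomeoI := ⟨(Sol.E Sol.fIso).toEquiv, Sol.E_mem Sol.fIso⟩ with hF
  set G : Stmt.HomeoI := ⟨(Sol.E Sol.gIso).toEquiv, Sol.E_mem Sol.gIso⟩ with hG
  have hsq : F * F = G * G := by
    apply Subtype.ext
    apply Equiv.ext
    intro p
    show (Sol.E Sol.fIso).toEquiv ((Sol.E Sol.fIso).toEquiv p)
        = (Sol.E Sol.gIso).toEquiv ((Sol.E Sol.gIso).toEquiv p)
    exact Sol.extFun_sq p
  have heq : F = G := Sol.sq_inj hBO hsq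
  have := congrArg (fun z : Stmt.HomeoI => (z : Equiv.Perm (Set.Icc (-1:ℝ) 1))
      (Sol.inc (Sol.phi (3/4)))) heq
  exact Sol.extFun_ne this
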